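/- Consider a Mallows model of length $n$ with parameter $\phi$ and central permutation $\pi^* = (e_1,\ldots,e_n)$. Let $f(i \to j)$ be the probability that the element at position $i$ of $\pi^*$ is ranked at position $j$ in a random sample. Then for all $i,j$, $f(i \to j) = f(j \to i)$. -/

import Mathlib

/-- Kendall-tau distance between two permutations of `Fin n`. -/
def dkt {n : ℕ} (π π' : Equiv.Perm (Fin n)) : ℕ :=
  (Finset.univ.filter (fun p : Fin n × Fin n =>
    p.1 < p.2 ∧ ¬((π.symm p.1 < π.symm p.2) ↔ (π'.symm p.1 < π'.symm p.2)))).card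

lemma swap_not_iff {α β : Type*} [LinearOrder α] [LinearOrder β] {a b : α} {c d : β}
    (hab : a ≠ b) (hcd : c ≠ d) (h : ¬(a < b ↔ c < d)) : ¬(b < a ↔ d < c) := by
  intro H
  apply h
  constructor
  · intro h1
    rcases hcd.lt_or_gt with h' | h'
    · exact h'
    · exact absurd (H.mpr h') (asymm h1)
  · intro h1
    rcases hab.lt_or_gt with h' | h'
    · exact h'
    · exact absurd (H.mp h') (asymm h1)

theorem Equiv.Perm.inv_apply_self {α : Type*} (f : Equiv.Perm α) (x : α) :
    f⁻¹ (f x) = x := f.symm_apply_apply x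

theorem Equiv.Perm.apply_inv_self {α : Type*} (f : Equiv.Perm α) (x : α) :
    f (f⁻¹ x) = x := f.apply_symm_apply x

lemma dkt_conj {n : ℕ} (π0 π : Equiv.Perm (Fin n)) :
    dkt (π0 * π⁻¹ * π0) π0 = dkt π π0 := by
  unfold dkt
  apply Finset.card_bij'
    (i := fun q _ => if π (π0⁻¹ q.1) < π (π0⁻¹ q.2)
      then (π (π0⁻¹ q.1), π (π0⁻¹ q.2)) else (π (π0⁻¹ q.2), π (π0⁻¹ q.1)))
    (j := fun p _ => if π0 (π⁻¹ p.1) < π0 (π⁻¹ p.2)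
      then (π0 (π⁻¹ p.1), π0 (π⁻¹ p.2)) else (π0 (π⁻¹ p.2), π0 (π⁻¹ p.1)))
  · intro q hq
    simp only [Finset.mem_filter, Finset.mem_univ, true_and, ← Equiv.Perm.inv_def,
      mul_inv_rev, inv_inv, Equiv.Perm.mul_apply, Equiv.Perm.inv_apply_self,
      Equiv.Perm.apply_inv_self] at hq ⊢
    obtain ⟨hlt, hne⟩ := hq
    have hx : π0⁻¹ q.1 ≠ π0⁻¹ q.2 := fun h => hlt.ne (by simpa using congrArg π0 h)
    split_ifs with h
    · refine ⟨h, fun H => hne ?_⟩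
      simpa using H.symm
    · have h' : π (π0⁻¹ q.2) < π (π0⁻¹ q.1) :=
        (lt_or_gt_of_ne (fun he => hx (π.injective he).symm)).resolve_right h
      have hA : π0⁻¹ (π (π0⁻¹ q.1)) ≠ π0⁻¹ (π (π0⁻¹ q.2)) :=
        fun h => hx (π.injective ((π0⁻¹ : Equiv.Perm (Fin n)).injective h))
      refine ⟨h', ?_⟩
      simpa using swap_not_iff hx hA (fun H2 => hne H2.symm)
  · intro p hp
    simp only [Finset.mem_filter, Finset.mem_univ, true_and, ← Equiv.Perm.inv_def,
      mul_inv_rev, inv_inv, Equiv.Perm.mul_apply, Equiv.Perm.inv_apply_self,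
      Equiv.Perm.apply_inv_self] at hp ⊢
    obtain ⟨hlt, hne⟩ := hp
    have hx : π⁻¹ p.1 ≠ π⁻¹ p.2 := fun h => hlt.ne (by simpa using congrArg π h)
    split_ifs with h
    · refine ⟨h, fun H => hne ?_⟩
      simpa using H.symm
    · have h' : π0 (π⁻¹ p.2) < π0 (π⁻¹ p.1) :=
        (lt_or_gt_of_ne (fun he => hx (π0.injective he).symm)).resolve_right h
      have hB : π0⁻¹ p.1 ≠ π0⁻¹ p.2 := fun h => hlt.ne (by simpa using congrArg π0 h)
      refine ⟨h', ?_⟩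
      simpa using swap_not_iff hB hx (fun H2 => hne H2.symm)
  · intro q hq
    simp only [Finset.mem_filter, Finset.mem_univ, true_and] at hq
    split_ifs with h h2 h2 <;>
      simp_all [← Equiv.Perm.inv_def, Equiv.Perm.inv_apply_self, Equiv.Perm.apply_inv_self,
        Prod.ext_iff] <;> omega
  · intro p hp
    simp only [Finset.mem_filter, Finset.mem_univ, true_and] at hp
    split_ifs with h h2 h2 <;>
      simp_all [← Equiv.Perm.inv_def, Equiv.Perm.inv_apply_self, Equiv.Perm.apply_inv_self,
        Prod.ext_iff] <;> omega

/-- Symmetry of the position-transition probabilities of a Mallows model: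
the probability that the element at position `i` of the central ranking `π0` ends up at
position `j` equals the probability that the element at position `j` ends up at
position `i`. -/
theorem mallows_position_symmetry (n : ℕ) (φ : ℝ) (h0 : 0 < φ) (h1 : φ < 1)
    (π0 : Equiv.Perm (Fin n)) (i j : Fin n) :
    (∑ π ∈ Finset.univ.filter (fun π : Equiv.Perm (Fin n) => π.symm (π0 i) = j),
        φ ^ dkt π π0) / (∑ π : Equiv.Perm (Fin n), φ ^ dkt π π0)
      = (∑ π ∈ Finset.univ.filter (fun π : Equiv.Perm (Fin n) => π.symm (π0 j) = i),
          φ ^ dkt π π0) / (∑ π : Equiv.Perm (Fin n), φ ^ dkt π π0) := by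
  congr 1
  apply Finset.sum_nbij' (i := fun π => π0 * π⁻¹ * π0) (j := fun π => π0 * π⁻¹ * π0)
  · intro π hπ
    simp only [Finset.mem_filter, Finset.mem_univ, true_and, ← Equiv.Perm.inv_def,
      mul_inv_rev, inv_inv, Equiv.Perm.mul_apply, Equiv.Perm.inv_apply_self] at hπ ⊢
    rw [show π j = π0 i from by rw [← hπ]; simp, Equiv.Perm.inv_apply_self]
  · intro π hπ
    simp only [Finset.mem_filter, Finset.mem_univ, true_and, ← Equiv.Perm.inv_def,
      mul_inv_rev, inv_inv, Equiv.Perm.mul_apply, Equiv.Perm.inv_apply_self] at hπ ⊢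
    rw [show π i = π0 j from by rw [← hπ]; simp, Equiv.Perm.inv_apply_self]
  · intro π _; group
  · intro π _; group
  · intro π _
    rw [dkt_conj]
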